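/- Let f(x,y) = x(1 + x̄y): ℂ² → ℂ. Then the set of asymptotic ρ-nonregular values S(f) is contained in {0}: for every sequence z_j in the Milnor set M(f) with ‖z_j‖ → ∞, if f(z_j) converges then its limit is 0. -/

import Mathlib

open ComplexConjugate Filter

lemma real_dichotomy (r k : ℝ) (hr : 0 < r) (hk : 0 ≤ k)
    (hrel : k = r * |1 - 2*(k^2*r^2)|)
    (hN : 3 ≤ max r (k*r^2)) :
    max r (k*r^2) / 2 ≤ r * |1 + r^4 - 2*k^2*r^6| ∨
      r * |1 + r^4 - 2*k^2*r^6| ≤ 2 / max r (k*r^2) := by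
  rcases le_or_gt 0 (1 - 2*(k^2*r^2)) with hw | hw
  · -- case w ≥ 0 : u ≤ 1/2
    left
    have hu : k^2*r^2 ≤ 1/2 := by linarith
    have hkr : k*r^2 ≤ r := by nlinarith [sq_nonneg (k*r^2 - r)]
    have hmax : max r (k*r^2) = r := max_eq_left hkr
    have hinner : 1 ≤ 1 + r^4 - 2*k^2*r^6 := by
      nlinarith [mul_nonneg (pow_pos hr 4).le hw]
    rw [hmax, abs_of_nonneg (by linarith : (0:ℝ) ≤ 1 + r^4 - 2*k^2*r^6)]
    nlinarith [mul_le_mul_of_nonneg_left hinner hr.le]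
  · -- case w < 0
    set v : ℝ := 2*(k^2*r^2) - 1 with hv
    have hv0 : 0 < v := by simp only [hv]; linarith
    have hkrv : k = r * v := by
      rw [hrel, abs_of_neg (by linarith : 1 - 2*(k^2*r^2) < 0)]; rw [hv]; ring
    have hrel2 : v + 1 = 2*r^4*v^2 := by
      linear_combination hv + 2*r^2*(k + r*v)*hkrv
    have hinner_eq : 1 + r^4 - 2*k^2*r^6 = 1 - r^4*v := by
      rw [hkrv]; linear_combination (r^4) * hrel2
    rcases le_or_gt v (2/5) with hv1 | hv1
    · -- v small: left disjunct
      left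
      have hu1 : k^2*r^2 ≤ 1 := by linarith
      have hkr : k*r^2 ≤ r := by nlinarith [sq_nonneg (k*r^2 - r)]
      have hmax : max r (k*r^2) = r := max_eq_left hkr
      have hbig : 3/2 ≤ r^4*v := by nlinarith [hrel2, mul_pos hv0 hv0]
      rw [hmax, hinner_eq, abs_of_nonpos (by linarith : 1 - r^4*v ≤ 0)]
      nlinarith [mul_le_mul_of_nonneg_left (show (1:ℝ)/2 ≤ r^4*v - 1 by linarith) hr.le]
    · rcases lt_or_ge v 1 with hv2 | hv2
      · -- 2/5 < v < 1 : contradiction with hN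
        exfalso
        have hu1 : k^2*r^2 ≤ 1 := by linarith
        have hkr : k*r^2 ≤ r := by nlinarith [sq_nonneg (k*r^2 - r)]
        have hmax : max r (k*r^2) = r := max_eq_left hkr
        rw [hmax] at hN
        have h2 : 9 ≤ r^2 := by nlinarith
        have h4 : 81 ≤ r^4 := by nlinarith
        have hv2' : 4/25 < v^2 := by nlinarith
        nlinarith [h4, hv2', hrel2]
      · -- v ≥ 1 : right disjunct
        right
        have hinner_pos : 0 ≤ 1 - r^4*v := by nlinarith [hrel2, mul_pos hv0 hv0]
        have hkr : r ≤ k*r^2 := by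
          rw [hkrv]
          nlinarith [sq_nonneg (r^3*v - r), pow_pos hr 4, sq_nonneg r]
        have hmax : max r (k*r^2) = k*r^2 := max_eq_right hkr
        rw [hmax, hinner_eq, hkrv]
        have hpos : 0 < r*v*r^2 := by positivity
        rw [le_div_iff₀ hpos, abs_of_nonneg hinner_pos]
        have heq : (r * (1 - r^4*v) * (r*v*r^2)) * (4*v^2) = v^2 - 1 := by
          linear_combination (1 + 2*r^4*v^2 - v) * hrel2
        nlinarith [heq, mul_pos hv0 hv0]

lemma milnor_dichotomy_alg (x y : ℂ) (lam : ℝ) (μ : ℂ) (hμ : μ ≠ 0)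
    (h1 : (lam:ℂ) * x = μ * conj (1 + conj x * y) + conj μ * (x * y))
    (h2 : (lam:ℂ) * y = μ * conj (x * conj x)) :
    x ≠ 0 ∧ ∃ c : ℂ, c ≠ 0 ∧ y = c * (x * conj x) ∧
      c = x * (((1 - 2 * Complex.normSq c * Complex.normSq x : ℝ)) : ℂ) := by
  have hx : x ≠ 0 := by
    rintro rfl
    simp only [map_zero, zero_mul, map_one, map_add, Complex.conj_conj, mul_zero,
      add_zero, mul_one] at h1
    exact hμ h1.symm
  have hlam : (lam:ℂ) ≠ 0 := by
    intro h0
    rw [h0, zero_mul] at h2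
    have := h2.symm
    rcases mul_eq_zero.mp this with h | h
    · exact hμ h
    · apply hx
      have : x * conj x = 0 := by
        have := congrArg conj h
        simpa using this
      rcases mul_eq_zero.mp this with h' | h'
      · exact h'
      · simpa using h'
  have hcxx : conj (x * conj x) = x * conj x := by
    rw [map_mul, Complex.conj_conj]; ring
  rw [hcxx] at h2
  have hy : y = (μ / (lam:ℂ)) * (x * conj x) := by
    field_simp
    linear_combination h2
  have hμc : μ = (lam:ℂ) * (μ / (lam:ℂ)) := by field_simp
  refine ⟨hx, μ / lam, div_ne_zero hμ hlam, hy, ?_⟩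
  set c : ℂ := μ / (lam:ℂ) with hc
  have key : x = c + 2*(c*conj c)*((x*conj x)*x) := by
    apply mul_left_cancel₀ hlam
    rw [h1, hy, hμc]
    simp only [map_add, map_mul, map_one, Complex.conj_conj, Complex.conj_ofReal]
    ring
  push_cast
  rw [← Complex.mul_conj c, ← Complex.mul_conj x]
  linear_combination (-1 : ℂ) * key

lemma milnor_dichotomy (x y : ℂ) (lam : ℝ) (μ : ℂ) (hμ : μ ≠ 0)
    (h1 : (lam:ℂ) * x = μ * conj (1 + conj x * y) + conj μ * (x * y))
    (h2 : (lam:ℂ) * y = μ * conj (x * conj x))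
    (hN : 3 ≤ ‖(x, y)‖) :
    ‖(x, y)‖ / 2 ≤ ‖x * (1 + conj x * y)‖ ∨ ‖x * (1 + conj x * y)‖ ≤ 2 / ‖(x, y)‖ := by
  obtain ⟨hx, c, hc0, hy, hceq⟩ := milnor_dichotomy_alg x y lam μ hμ h1 h2
  set r : ℝ := ‖x‖ with hrdef
  set kk : ℝ := ‖c‖ with hkdef
  have hr : 0 < r := norm_pos_iff.mpr hx
  have hk : 0 ≤ kk := norm_nonneg _
  -- abs relation
  have habs : kk = r * |1 - 2*(kk^2*r^2)| := by
    have h2' : |1 - 2 * Complex.normSq c * Complex.normSq x| = |1 - 2*(kk^2*r^2)| := by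
      rw [Complex.normSq_eq_norm_sq, Complex.normSq_eq_norm_sq, ← hrdef, ← hkdef]
      congr 1; ring
    calc kk = ‖(x * ((1 - 2 * Complex.normSq c * Complex.normSq x : ℝ) : ℂ))‖ := by
          rw [hkdef]; exact congrArg _ hceq
      _ = r * |1 - 2*(kk^2*r^2)| := by rw [norm_mul, Complex.norm_real, Real.norm_eq_abs, ← hrdef, h2']
  -- norm of pair
  have hay : ‖y‖ = kk * r^2 := by
    rw [hy, norm_mul, norm_mul, Complex.norm_conj, ← hrdef, ← hkdef]; ring
  have hpair : ‖(x, y)‖ = max r (kk*r^2) := by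
    rw [Prod.norm_def]; show max ‖x‖ ‖y‖ = _; rw [hay, ← hrdef]
  -- value of f
  have hceq' : c = x * (1 - 2*((Complex.normSq c : ℂ))*((Complex.normSq x : ℂ))) := by
    conv_lhs => rw [hceq]
    push_cast; ring
  have h1pc : (1:ℂ) + conj x * y
      = (((1 + (1 - 2*Complex.normSq c*Complex.normSq x)*(Complex.normSq x)^2 : ℝ)) : ℂ) := by
    push_cast
    rw [hy]
    have hmx : x * conj x = ((Complex.normSq x : ℂ)) := Complex.mul_conj x
    linear_combination (conj x * (x * conj x)) * hceq'
      + (1 - 2*((Complex.normSq c : ℂ))*((Complex.normSq x : ℂ)))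
        * (x * conj x + ((Complex.normSq x : ℂ))) * hmx
  have hfabs : ‖x * (1 + conj x * y)‖ = r * |1 + r^4 - 2*kk^2*r^6| := by
    rw [norm_mul, h1pc, Complex.norm_real, Real.norm_eq_abs, ← hrdef]
    congr 1
    rw [Complex.normSq_eq_norm_sq, Complex.normSq_eq_norm_sq, ← hrdef, ← hkdef]
    congr 1
    ring
  rw [hpair, hfabs]
  exact real_dichotomy r kk hr hk habs (hpair ▸ hN)

/-- For the mixed polynomial `f(x,y) = x(1 + x̄y)` on `ℂ²`, the set of
asymptotic ρ-nonregular values satisfies `S(f) ⊆ {0}`: for every sequence `z_j` in the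
Milnor set `M(f) = { z : ∃ λ ∈ ℝ, μ ∈ ℂ*, λz = μ·conj(df)(z) + conj(μ)·d̄f(z) }` with
`‖z_j‖ → ∞` and `f(z_j) → t₀`, necessarily `t₀ = 0`.
Here `df = (1 + x̄y, |x|² = x·x̄)` and `d̄f = (xy, 0)`. -/
theorem asymptotic_nonregular_values_of_mixed_broughton :
    ∀ t₀ : ℂ,
      (∃ z : ℕ → ℂ × ℂ,
        (∀ j, ∃ (lam : ℝ) (μ : ℂ), μ ≠ 0 ∧
          (lam : ℂ) * (z j).1
            = μ * conj (1 + conj (z j).1 * (z j).2) + conj μ * ((z j).1 * (z j).2) ∧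
          (lam : ℂ) * (z j).2 = μ * conj ((z j).1 * conj (z j).1)) ∧
        Tendsto (fun j => ‖z j‖) atTop atTop ∧
        Tendsto (fun j => (z j).1 * (1 + conj (z j).1 * (z j).2)) atTop (nhds t₀)) →
      t₀ = 0 := by
  intro t₀ ⟨z, hM, hnorm, hf⟩
  have hnf : Tendsto (fun j => ‖(z j).1 * (1 + conj (z j).1 * (z j).2)‖) atTop
      (nhds ‖t₀‖) := hf.norm
  have hlt : ∀ᶠ j in atTop, ‖(z j).1 * (1 + conj (z j).1 * (z j).2)‖ < ‖t₀‖ + 1 :=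
    hnf.eventually (eventually_lt_nhds (by linarith [norm_nonneg t₀]))
  have hbig : ∀ᶠ j in atTop, max 3 (2*‖t₀‖ + 3) ≤ ‖z j‖ :=
    hnorm.eventually_ge_atTop _
  have hsmall : ∀ᶠ j in atTop,
      ‖(z j).1 * (1 + conj (z j).1 * (z j).2)‖ ≤ 2 / ‖z j‖ := by
    filter_upwards [hbig, hlt] with j h1 h2
    obtain ⟨lam, μ, hμ, hz1, hz2⟩ := hM j
    have hzz : ((z j).1, (z j).2) = z j := rfl
    have hN : 3 ≤ ‖((z j).1, (z j).2)‖ := by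
      rw [hzz]; exact le_trans (le_max_left _ _) h1
    rcases milnor_dichotomy (z j).1 (z j).2 lam μ hμ hz1 hz2 hN with h | h
    · exfalso
      rw [hzz] at h
      have h3 : 2*‖t₀‖ + 3 ≤ ‖z j‖ := le_trans (le_max_right _ _) h1
      linarith
    · rw [hzz] at h
      exact h
  have h2z : Tendsto (fun j => 2 / ‖z j‖) atTop (nhds 0) :=
    tendsto_const_nhds.div_atTop hnorm
  have hle : ‖t₀‖ ≤ 0 := le_of_tendsto_of_tendsto hnf h2z hsmall
  simpa using norm_le_zero_iff.mp hle
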